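/- The multiplicity of the irreducible representation S_λ W, for λ a partition with exactly two rows λ₁ ≥ λ₂ and λ₁ + λ₂ = 3k, in S³(S^k W) (third symmetric power of the k-th symmetric power, dim W ≥ 2) equals (1/6)(c₁ + 3c₂ + 2c₃), where: c₁ = λ₂+1 if λ₂ ≤ k and λ₁-λ₂+1 if λ₂ ≥ k; c₂ = [λ₂ even] if λ₂ ≤ k, and if λ₂ ≥ k then c₂ = 0 for k odd, c₂ = 1 for k even and λ₂ even, c₂ = -1 for k even and λ₂ odd; c₃ = 1 if λ₂ ≡ 0 mod 3, -1 if λ₂ ≡ 1 mod 3, 0 if λ₂ ≡ 2 mod 3. -/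

import Mathlib

open Finset

/-- The complete homogeneous symmetric polynomial of degree `m` in two variables. -/
noncomputable def hpoly (m : ℕ) (x y : ℂ) : ℂ := ∑ j ∈ Finset.range (m + 1), x ^ (m - j) * y ^ j

/-- The coefficient `c₁` from the decomposition `3 = 1+1+1`. -/
noncomputable def c1 (k l2 : ℕ) : ℂ := if l2 ≤ k then (l2 : ℂ) + 1 else (3 * k : ℂ) - 2 * l2 + 1

/-- The coefficient `c₂` from the decomposition `3 = 2+1`. -/
noncomputable def c2 (k l2 : ℕ) : ℂ :=
  if l2 ≤ k then (if Even l2 then 1 else 0)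
  else if Odd k then 0 else if Even l2 then 1 else -1

/-- The coefficient `c₃` from the decomposition `3 = 3`. -/
noncomputable def c3 (l2 : ℕ) : ℂ := if l2 % 3 = 0 then 1 else if l2 % 3 = 1 then -1 else 0

/-! ### Auxiliary definitions and lemmas -/

/-- The antisymmetrized monomial `x^(3k+1-l) y^l - x^l y^(3k+1-l)`. -/
noncomputable def dterm (k l : ℕ) (x y : ℂ) : ℂ :=
  x ^ (3*k+1-l) * y ^ l - x ^ l * y ^ (3*k+1-l)

/-- The combined coefficient on the full range. -/
noncomputable def U (k l : ℕ) : ℂ :=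
  (if l ≤ 2*k then ((min l (2*k-l) : ℕ) : ℂ) + 1 else 0)
  + 3 * (if l ≤ 2*k ∧ l % 2 = 0 then 1 else 0)
  + 2 * (if l ≤ 3*k ∧ l % 3 = 0 then 1 else 0)

lemma geo (m : ℕ) (x y : ℂ) : (x - y) * hpoly m x y = x ^ (m+1) - y ^ (m+1) := by
  have h : hpoly m x y = ∑ i ∈ range (m+1), x ^ i * y ^ (m + 1 - 1 - i) := by
    rw [hpoly, ← Finset.sum_range_reflect]
    refine Finset.sum_congr rfl fun j hj => ?_
    simp only [Finset.mem_range] at hj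
    rw [show m - (m + 1 - 1 - j) = j by omega, show m + 1 - 1 - j = m - j by omega]
  rw [h, mul_comm, geom_sum₂_mul]

lemma fibcard (k m : ℕ) (hm : m ≤ 2*k) :
    ((range (k+1) ×ˢ range (k+1)).filter (fun p => p.1 + p.2 = m)).card = min m (2*k-m) + 1 := by
  have h : (range (k+1) ×ˢ range (k+1)).filter (fun p => p.1 + p.2 = m)
      = (Finset.Icc (m - k) (min m k)).image (fun j => (j, m - j)) := by
    ext ⟨a, b⟩
    simp only [Finset.mem_filter, Finset.mem_product, Finset.mem_image, Finset.mem_Icc,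
      Finset.mem_range, Prod.mk.injEq]
    constructor
    · rintro ⟨⟨ha, hb⟩, hab⟩
      exact ⟨a, ⟨by omega, by omega⟩, rfl, by omega⟩
    · rintro ⟨j, ⟨hj1, hj2⟩, rfl, rfl⟩
      refine ⟨⟨by omega, by omega⟩, by omega⟩
  rw [h, Finset.card_image_of_injective _ (fun a b hab => by simpa using congrArg Prod.fst hab),
    Nat.card_Icc]
  omega

lemma H2 (k : ℕ) (x y : ℂ) :
    hpoly k x y ^ 2
      = ∑ m ∈ range (2*k+1), (((min m (2*k-m) : ℕ) : ℂ) + 1) * (x ^ (2*k-m) * y ^ m) := by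
  rw [hpoly, sq, Finset.sum_mul_sum, ← Finset.sum_product']
  have hmap : ∀ p ∈ range (k+1) ×ˢ range (k+1), p.1 + p.2 ∈ range (2*k+1) := by
    rintro ⟨a, b⟩ hp
    simp only [Finset.mem_product, Finset.mem_range] at hp ⊢
    omega
  rw [← Finset.sum_fiberwise_of_maps_to hmap
    (fun p => x ^ (k - p.1) * y ^ p.1 * (x ^ (k - p.2) * y ^ p.2))]
  refine Finset.sum_congr rfl fun m hm => ?_
  simp only [Finset.mem_range] at hm
  have hfib : ∀ p ∈ (range (k+1) ×ˢ range (k+1)).filter (fun p => p.1 + p.2 = m),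
      x ^ (k - p.1) * y ^ p.1 * (x ^ (k - p.2) * y ^ p.2) = x ^ (2*k-m) * y ^ m := by
    rintro ⟨a, b⟩ hp
    simp only [Finset.mem_filter, Finset.mem_product, Finset.mem_range] at hp
    rw [mul_mul_mul_comm, ← pow_add, ← pow_add, show k - a + (k - b) = 2*k - m by omega,
      show a + b = m by omega]
  rw [Finset.sum_congr rfl hfib, Finset.sum_const, fibcard k m (by omega), nsmul_eq_mul]
  push_cast
  ring

lemma A1 (k : ℕ) (x y : ℂ) :
    (x - y) * hpoly k x y ^ 3
      = ∑ l ∈ range (2*k+1), (((min l (2*k-l) : ℕ) : ℂ) + 1) * dterm k l x y := by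
  rw [show (x - y) * hpoly k x y ^ 3 = ((x - y) * hpoly k x y) * hpoly k x y ^ 2 by ring,
    geo, H2, Finset.mul_sum]
  simp only [dterm, mul_sub, Finset.sum_sub_distrib]
  have h1 : ∑ m ∈ range (2*k+1),
        (x^(k+1) - y^(k+1)) * ((((min m (2*k-m) : ℕ) : ℂ) + 1) * (x^(2*k-m) * y^m))
      = (∑ m ∈ range (2*k+1), (((min m (2*k-m) : ℕ) : ℂ) + 1) * (x^(3*k+1-m) * y^m))
        - ∑ m ∈ range (2*k+1), (((min m (2*k-m) : ℕ) : ℂ) + 1) * (x^(2*k-m) * y^(m+(k+1))) := by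
    rw [← Finset.sum_sub_distrib]
    refine Finset.sum_congr rfl fun m hm => ?_
    simp only [Finset.mem_range] at hm
    rw [show 3*k+1-m = (2*k-m)+(k+1) by omega, pow_add, pow_add]
    ring
  rw [h1]
  congr 1
  rw [← Finset.sum_range_reflect
    (fun l => (((min l (2*k-l) : ℕ) : ℂ) + 1) * (x^l * y^(3*k+1-l))) (2*k+1)]
  refine Finset.sum_congr rfl fun m hm => ?_
  simp only [Finset.mem_range] at hm
  rw [show 2*k+1-1-m = 2*k-m by omega, show 3*k+1-(2*k-m) = m+(k+1) by omega,
    show min (2*k-m) (2*k-(2*k-m)) = min m (2*k-m) by omega]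

lemma A2 (k : ℕ) (x y : ℂ) :
    (x - y) * (hpoly k (x^2) (y^2) * hpoly k x y) = ∑ j ∈ range (k+1), dterm k (2*j) x y := by
  rw [show (x - y) * (hpoly k (x^2) (y^2) * hpoly k x y)
      = hpoly k (x^2) (y^2) * ((x - y) * hpoly k x y) by ring, geo, hpoly, Finset.sum_mul]
  simp only [dterm]
  rw [Finset.sum_sub_distrib]
  have h1 : ∑ j ∈ range (k+1), (x^2)^(k-j) * (y^2)^j * (x^(k+1) - y^(k+1))
      = (∑ j ∈ range (k+1), x^(3*k+1-2*j) * y^(2*j))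
        - ∑ j ∈ range (k+1), x^(2*(k-j)) * y^(2*j+(k+1)) := by
    rw [← Finset.sum_sub_distrib]
    refine Finset.sum_congr rfl fun j hj => ?_
    simp only [Finset.mem_range] at hj
    rw [← pow_mul, ← pow_mul, show 3*k+1-2*j = 2*(k-j)+(k+1) by omega, pow_add, pow_add]
    ring
  rw [h1]
  congr 1
  rw [← Finset.sum_range_reflect (fun j => x^(2*j) * y^(3*k+1-2*j)) (k+1)]
  refine Finset.sum_congr rfl fun j hj => ?_
  simp only [Finset.mem_range] at hj
  rw [show k+1-1-j = k-j by omega, show 3*k+1-2*(k-j) = 2*j+(k+1) by omega]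

lemma A3 (k : ℕ) (x y : ℂ) :
    (x - y) * hpoly k (x^3) (y^3) = ∑ j ∈ range (k+1), dterm k (3*j) x y := by
  rw [hpoly, Finset.mul_sum]
  simp only [dterm]
  rw [Finset.sum_sub_distrib]
  have h1 : ∑ j ∈ range (k+1), (x-y) * ((x^3)^(k-j) * (y^3)^j)
      = (∑ j ∈ range (k+1), x^(3*k+1-3*j) * y^(3*j))
        - ∑ j ∈ range (k+1), x^(3*(k-j)) * y^(3*j+1) := by
    rw [← Finset.sum_sub_distrib]
    refine Finset.sum_congr rfl fun j hj => ?_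
    simp only [Finset.mem_range] at hj
    rw [← pow_mul, ← pow_mul, show 3*k+1-3*j = 3*(k-j)+1 by omega, pow_succ, pow_succ]
    ring
  rw [h1]
  congr 1
  rw [← Finset.sum_range_reflect (fun j => x^(3*j) * y^(3*k+1-3*j)) (k+1)]
  refine Finset.sum_congr rfl fun j hj => ?_
  simp only [Finset.mem_range] at hj
  rw [show k+1-1-j = k-j by omega, show 3*k+1-3*(k-j) = 3*j+1 by omega]

lemma conv1 (k : ℕ) (x y : ℂ) :
    ∑ l ∈ range (3*k+1), (if l ≤ 2*k then ((min l (2*k-l) : ℕ) : ℂ) + 1 else 0) * dterm k l x y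
      = ∑ l ∈ range (2*k+1), (((min l (2*k-l) : ℕ) : ℂ) + 1) * dterm k l x y := by
  classical
  rw [← Finset.sum_subset (Finset.range_subset_range.mpr (show 2*k+1 ≤ 3*k+1 by omega))
    (fun l _ hnl => by
      simp only [Finset.mem_range] at hnl
      rw [if_neg (by omega), zero_mul])]
  exact Finset.sum_congr rfl fun l hl => by
    simp only [Finset.mem_range] at hl
    rw [if_pos (by omega)]

lemma conv2 (k : ℕ) (x y : ℂ) :
    ∑ l ∈ range (3*k+1), (if l ≤ 2*k ∧ l % 2 = 0 then (1:ℂ) else 0) * dterm k l x y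
      = ∑ j ∈ range (k+1), dterm k (2*j) x y := by
  classical
  have h1 : ∑ l ∈ range (3*k+1), (if l ≤ 2*k ∧ l % 2 = 0 then (1:ℂ) else 0) * dterm k l x y
      = ∑ l ∈ (range (3*k+1)).filter (fun l => l ≤ 2*k ∧ l % 2 = 0), dterm k l x y := by
    rw [Finset.sum_filter]
    exact Finset.sum_congr rfl fun l _ => by split <;> simp
  have h2 : (range (3*k+1)).filter (fun l => l ≤ 2*k ∧ l % 2 = 0)
      = (range (k+1)).image (fun j => 2*j) := by
    ext l
    simp only [Finset.mem_filter, Finset.mem_range, Finset.mem_image]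
    constructor
    · rintro ⟨h1, h2, h3⟩; exact ⟨l/2, by omega, by omega⟩
    · rintro ⟨j, hj, rfl⟩; omega
  rw [h1, h2, Finset.sum_image (fun a _ b _ h => by omega)]

lemma conv3 (k : ℕ) (x y : ℂ) :
    ∑ l ∈ range (3*k+1), (if l ≤ 3*k ∧ l % 3 = 0 then (1:ℂ) else 0) * dterm k l x y
      = ∑ j ∈ range (k+1), dterm k (3*j) x y := by
  classical
  have h1 : ∑ l ∈ range (3*k+1), (if l ≤ 3*k ∧ l % 3 = 0 then (1:ℂ) else 0) * dterm k l x y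
      = ∑ l ∈ (range (3*k+1)).filter (fun l => l ≤ 3*k ∧ l % 3 = 0), dterm k l x y := by
    rw [Finset.sum_filter]
    exact Finset.sum_congr rfl fun l _ => by split <;> simp
  have h2 : (range (3*k+1)).filter (fun l => l ≤ 3*k ∧ l % 3 = 0)
      = (range (k+1)).image (fun j => 3*j) := by
    ext l
    simp only [Finset.mem_filter, Finset.mem_range, Finset.mem_image]
    constructor
    · rintro ⟨h1, h2, h3⟩; exact ⟨l/3, by omega, by omega⟩
    · rintro ⟨j, hj, rfl⟩; omega
  rw [h1, h2, Finset.sum_image (fun a _ b _ h => by omega)]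

lemma U_top (k : ℕ) : U k (3*k+1) = 0 := by
  rw [U, if_neg (by omega), if_neg (by omega), if_neg (by omega)]
  ring

lemma dterm_refl (k l : ℕ) (hl : l ≤ 3*k+1) (x y : ℂ) :
    dterm k (3*k+1-l) x y = - dterm k l x y := by
  rw [dterm, dterm, show 3*k+1-(3*k+1-l) = l by omega]
  ring

lemma fold_sum (k : ℕ) (x y : ℂ) :
    ∑ l ∈ range (3*k+1), U k l * dterm k l x y
      = ∑ l ∈ range (3*k/2+1), (U k l - U k (3*k+1-l)) * dterm k l x y := by
  have hsplit : ∑ l ∈ range (3*k+1+1), U k l * dterm k l x y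
      = (∑ l ∈ range (3*k/2+1), U k l * dterm k l x y)
        + ∑ l ∈ Ico (3*k/2+1) (3*k+1+1), U k l * dterm k l x y := by
    rw [Finset.range_eq_Ico, Finset.range_eq_Ico]
    exact (Finset.sum_Ico_consecutive (fun l => U k l * dterm k l x y) (m := 0) (n := 3*k/2+1) (k := 3*k+1+1) (by omega) (by omega)).symm
  have htop : ∑ l ∈ range (3*k+1+1), U k l * dterm k l x y
      = ∑ l ∈ range (3*k+1), U k l * dterm k l x y := by
    rw [Finset.sum_range_succ, U_top, zero_mul, add_zero]
  have hIco : ∑ l ∈ Ico (3*k/2+1) (3*k+1+1), U k l * dterm k l x y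
      = ∑ l ∈ range (3*k+1-(3*k/2)), U k (3*k+1-l) * dterm k (3*k+1-l) x y := by
    refine Finset.sum_nbij' (fun l => 3*k+1 - l) (fun l => 3*k+1 - l) ?_ ?_ ?_ ?_ ?_
    · intro a ha; simp only [Finset.mem_Ico] at ha; simp only [Finset.mem_range]; omega
    · intro a ha; simp only [Finset.mem_range] at ha; simp only [Finset.mem_Ico]; omega
    · intro a ha; simp only [Finset.mem_Ico] at ha; show 3*k+1-(3*k+1-a) = a; omega
    · intro a ha; simp only [Finset.mem_range] at ha; show 3*k+1-(3*k+1-a) = a; omega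
    · intro a ha; simp only [Finset.mem_Ico] at ha
      rw [show 3*k+1 - (3*k+1 - a) = a by omega]
  have hshort : ∑ l ∈ range (3*k+1-(3*k/2)), U k (3*k+1-l) * dterm k (3*k+1-l) x y
      = ∑ l ∈ range (3*k/2+1), U k (3*k+1-l) * dterm k (3*k+1-l) x y := by
    rcases Nat.even_or_odd (3*k) with h | h <;> [rw [Nat.even_iff] at h; rw [Nat.odd_iff] at h]
    · rw [show 3*k+1-(3*k/2) = 3*k/2 + 1 by omega]
    · rw [show 3*k+1-(3*k/2) = (3*k/2+1) + 1 by omega, Finset.sum_range_succ,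
        show 3*k+1 - (3*k/2+1) = 3*k/2+1 by omega, show dterm k (3*k/2+1) x y = 0 by
          rw [dterm, show 3*k+1-(3*k/2+1) = 3*k/2+1 by omega]; ring]
      simp
  calc ∑ l ∈ range (3*k+1), U k l * dterm k l x y
      = ∑ l ∈ range (3*k+1+1), U k l * dterm k l x y := htop.symm
    _ = (∑ l ∈ range (3*k/2+1), U k l * dterm k l x y)
        + ∑ l ∈ range (3*k/2+1), U k (3*k+1-l) * dterm k (3*k+1-l) x y := by
        rw [hsplit, hIco, hshort]
    _ = ∑ l ∈ range (3*k/2+1), (U k l - U k (3*k+1-l)) * dterm k l x y := by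
        rw [← Finset.sum_add_distrib]
        refine Finset.sum_congr rfl fun l hl => ?_
        simp only [Finset.mem_range] at hl
        rw [dterm_refl k l (by omega)]
        ring

set_option maxHeartbeats 1000000 in
lemma coeff (k l : ℕ) (hl : l ≤ 3*k/2) :
    c1 k l + 3 * c2 k l + 2 * c3 l = U k l - U k (3*k+1-l) := by
  simp only [c1, c2, c3, U, Nat.even_iff, Nat.odd_iff]
  by_cases hlk : l ≤ k
  · rw [show min l (2*k-l) = l by omega]
    have b1 : l ≤ 2*k := by omega
    have b2 : ¬(3*k+1-l ≤ 2*k) := by omega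
    have b3 : l ≤ 3*k := by omega
    rcases Nat.mod_two_eq_zero_or_one l with h2|h2 <;>
    rcases (show l%3=0 ∨ l%3=1 ∨ l%3=2 by omega) with h3|h3|h3 <;>
    rcases (show (3*k+1-l)%3=0 ∨ (3*k+1-l)%3=1 ∨ (3*k+1-l)%3=2 by omega) with hr3|hr3|hr3 <;>
    first
      | (exfalso; omega)
      | (simp [hlk, b1, b2, b3, h2, h3, hr3] <;> (push_cast; ring1))
      | (have hb : 1 ≤ l := by omega
         simp [hb, hlk, b1, b2, b3, h2, h3, hr3] <;> (push_cast; ring1))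
  · rw [show min l (2*k-l) = 2*k-l by omega,
      show min (3*k+1-l) (2*k-(3*k+1-l)) = l-(k+1) by omega,
      Nat.cast_sub (show l ≤ 2*k by omega), Nat.cast_sub (show k+1 ≤ l by omega)]
    have b1 : l ≤ 2*k := by omega
    have b3 : l ≤ 3*k := by omega
    have br1 : 3*k+1-l ≤ 2*k := by omega
    have br3 : 3*k+1-l ≤ 3*k := by omega
    rcases Nat.mod_two_eq_zero_or_one k with hk2|hk2 <;>
    rcases Nat.mod_two_eq_zero_or_one l with h2|h2 <;>
    rcases (show l%3=0 ∨ l%3=1 ∨ l%3=2 by omega) with h3|h3|h3 <;>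
    rcases Nat.mod_two_eq_zero_or_one (3*k+1-l) with hr2|hr2 <;>
    rcases (show (3*k+1-l)%3=0 ∨ (3*k+1-l)%3=1 ∨ (3*k+1-l)%3=2 by omega) with hr3|hr3|hr3 <;>
    first
      | (exfalso; omega)
      | (simp [hlk, hk2, b1, b3, br1, br3, h2, h3, hr2, hr3] <;> (push_cast; ring1))
      | (have hb : 1 ≤ l := by omega
         simp [hb, hlk, hk2, b1, b3, br1, br3, h2, h3, hr2, hr3] <;> (push_cast; ring1))

/-- the multiplicity of `S_{(λ₁,λ₂)} W` (two rows, `λ₁ + λ₂ = 3k`,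
`dim W ≥ 2`) in `S³(S^k W)` equals `(1/6)(c₁ + 3c₂ + 2c₃)`.  Stated as the equivalent
character identity in two variables: the character of `S³(S^k)` is
`(h_k(x,y)³ + 3 h_k(x²,y²) h_k(x,y) + 2 h_k(x³,y³))/6`, and multiplying by `6(x - y)` it
equals `∑_{λ₂} (c₁ + 3c₂ + 2c₃)·(x^{λ₁+1}y^{λ₂} - x^{λ₂}y^{λ₁+1})`. -/
theorem sym3_symk_multiplicity (k : ℕ) (x y : ℂ) :
    (x - y) * ((hpoly k x y) ^ 3 + 3 * hpoly k (x ^ 2) (y ^ 2) * hpoly k x y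
        + 2 * hpoly k (x ^ 3) (y ^ 3)) =
      ∑ l2 ∈ Finset.range (3 * k / 2 + 1),
        (c1 k l2 + 3 * c2 k l2 + 2 * c3 l2) *
          (x ^ (3 * k - l2 + 1) * y ^ l2 - x ^ l2 * y ^ (3 * k - l2 + 1)) := by
  have expand : (x - y) * ((hpoly k x y) ^ 3 + 3 * hpoly k (x ^ 2) (y ^ 2) * hpoly k x y
        + 2 * hpoly k (x ^ 3) (y ^ 3))
      = ∑ l ∈ range (3*k+1), U k l * dterm k l x y := by
    have step : (x - y) * ((hpoly k x y) ^ 3 + 3 * hpoly k (x ^ 2) (y ^ 2) * hpoly k x y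
          + 2 * hpoly k (x ^ 3) (y ^ 3))
        = (x - y) * hpoly k x y ^ 3
          + 3 * ((x - y) * (hpoly k (x^2) (y^2) * hpoly k x y))
          + 2 * ((x - y) * hpoly k (x^3) (y^3)) := by ring
    rw [step, A1, A2, A3, ← conv1, ← conv2, ← conv3, Finset.mul_sum, Finset.mul_sum,
      ← Finset.sum_add_distrib, ← Finset.sum_add_distrib]
    refine Finset.sum_congr rfl fun l _ => ?_
    rw [U]
    ring
  rw [expand, fold_sum]
  refine Finset.sum_congr rfl fun l hl => ?_
  simp only [Finset.mem_range] at hl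
  rw [← coeff k l (by omega), dterm, show 3*k+1-l = 3*k-l+1 by omega]
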